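/- Let Ω ⊂ ℝ^{n+1} be open, p > n+1, and let f ∈ W^{2,p}_loc(Ω; ℝ^{n+1}) be an immersion with (df)ᵀ η (df) = (g_{αβ}), where g_{αβ} ∈ W^{1,p}_loc. Then the columns F_σ = ∂f/∂x^σ satisfy ∂F_σ/∂x^α = Γ^β_{ασ} F_β a.e. in Ω, where Γ^β_{ασ} = ½ g^{βν}(∂_α g_{νσ} + ∂_σ g_{αν} − ∂_ν g_{ασ}) are the Christoffel symbols of (g_{αβ}). -/

import Mathlib

open Matrix

/-- The Minkowski matrix `η = diag(-1, 1, ..., 1)` of size `(n+1) × (n+1)`. -/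
noncomputable def minkowskiEta (n : ℕ) : Matrix (Fin (n + 1)) (Fin (n + 1)) ℝ :=
  Matrix.diagonal (fun i => if i = 0 then (-1 : ℝ) else 1)

/-- The Jacobian matrix `df` of a map `f : ℝ^{n+1} → ℝ^{n+1}`, with `(df)_{αβ} = ∂f_α/∂x^β`. -/
noncomputable def jacobian (n : ℕ) (f : (Fin (n + 1) → ℝ) → Fin (n + 1) → ℝ)
    (x : Fin (n + 1) → ℝ) : Matrix (Fin (n + 1)) (Fin (n + 1)) ℝ :=
  Matrix.of fun α β => fderiv ℝ f x (Pi.single β 1) α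

/-- If `f` is an immersion with `(df)ᵀ η (df) = g` on an open set `Ω`,
then the columns `F_σ = ∂f/∂x^σ` satisfy `∂F_σ/∂x^α = Γ^β_{ασ} F_β` on `Ω`, where
`Γ^β_{ασ} = ½ g^{βν}(∂_α g_{νσ} + ∂_σ g_{αν} − ∂_ν g_{ασ})` are the Christoffel symbols
of `g`: an isometric immersion into Minkowski space preserves the Levi-Civita connection. -/
theorem isometric_immersion_preserves_connection (n : ℕ)
    (Ω : Set (Fin (n + 1) → ℝ)) (hΩ : IsOpen Ω)
    (f : (Fin (n + 1) → ℝ) → Fin (n + 1) → ℝ)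
    (g : (Fin (n + 1) → ℝ) → Matrix (Fin (n + 1)) (Fin (n + 1)) ℝ)
    (hfd : ∀ x ∈ Ω, DifferentiableAt ℝ f x)
    (hf2 : ∀ σ : Fin (n + 1), ∀ x ∈ Ω,
      DifferentiableAt ℝ (fun y => fderiv ℝ f y (Pi.single σ 1)) x)
    (himm : ∀ x ∈ Ω, IsUnit (jacobian n f x))
    (hginv : ∀ x ∈ Ω, IsUnit (g x))
    (hgd : ∀ x ∈ Ω, ∀ α β, DifferentiableAt ℝ (fun y => g y α β) x)
    (hiso : ∀ x ∈ Ω, (jacobian n f x)ᵀ * minkowskiEta n * jacobian n f x = g x) :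
    ∀ x ∈ Ω, ∀ α σ : Fin (n + 1),
      fderiv ℝ (fun y => fderiv ℝ f y (Pi.single σ 1)) x (Pi.single α 1)
        = ∑ β : Fin (n + 1),
            ((1 / 2) * ∑ ν : Fin (n + 1), (g x)⁻¹ β ν *
              (fderiv ℝ (fun y => g y ν σ) x (Pi.single α 1)
               + fderiv ℝ (fun y => g y α ν) x (Pi.single σ 1)
               - fderiv ℝ (fun y => g y α σ) x (Pi.single ν 1)))
            • fderiv ℝ f x (Pi.single β 1) := by
  intro x hx α σ
  -- basic notations
  let e : Fin (n + 1) → (Fin (n + 1) → ℝ) := fun β => Pi.single β 1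
  let ηf : Fin (n + 1) → ℝ := fun i => if i = 0 then (-1 : ℝ) else 1
  let F : Fin (n + 1) → (Fin (n + 1) → ℝ) := fun τ => fderiv ℝ f x (e τ)
  let Hm : Fin (n + 1) → Fin (n + 1) → (Fin (n + 1) → ℝ) :=
    fun μ τ => fderiv ℝ (fun y => fderiv ℝ f y (e τ)) x (e μ)
  -- decomposition of any continuous linear map on E
  have hdecomp : ∀ (L : (Fin (n + 1) → ℝ) →L[ℝ] (Fin (n + 1) → ℝ)) (v : Fin (n + 1) → ℝ), L v = ∑ β, v β • L (e β) := by
    intro L v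
    conv_lhs => rw [show v = ∑ β, v β • (e β) by
      funext i; simp [e, Finset.sum_apply, Pi.single_apply]]
    simp [e]
  -- the total derivative map is differentiable at x
  have hDf : (fderiv ℝ f) = fun y => ∑ τ,
      (ContinuousLinearMap.proj τ : (Fin (n + 1) → ℝ) →L[ℝ] ℝ).smulRight (fderiv ℝ f y (e τ)) := by
    funext y
    apply ContinuousLinearMap.ext; intro v
    rw [hdecomp (fderiv ℝ f y) v]
    simp
  have hDfd : DifferentiableAt ℝ (fderiv ℝ f) x := by
    rw [hDf]
    refine DifferentiableAt.fun_sum fun τ _ => ?_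
    exact ((ContinuousLinearMap.smulRightL ℝ (Fin (n + 1) → ℝ) (Fin (n + 1) → ℝ)
      (ContinuousLinearMap.proj τ : (Fin (n + 1) → ℝ) →L[ℝ] ℝ)).differentiable.differentiableAt).comp x (hf2 τ x hx)
  -- identification of directional second derivatives with the full second derivative
  have hcomp : ∀ τ : Fin (n + 1), fderiv ℝ (fun y => fderiv ℝ f y (e τ)) x
      = (ContinuousLinearMap.apply ℝ (Fin (n + 1) → ℝ) (e τ)).comp (fderiv ℝ (fderiv ℝ f) x) := by
    intro τ
    exact ((ContinuousLinearMap.apply ℝ (Fin (n + 1) → ℝ) (e τ)).hasFDerivAt.comp x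
      hDfd.hasFDerivAt).fderiv
  -- symmetry of second derivatives (Schwarz)
  have hsym : ∀ μ τ, Hm μ τ = Hm τ μ := by
    intro μ τ
    have hev : ∀ᶠ y in nhds x, HasFDerivAt f (fderiv ℝ f y) y :=
      Filter.eventually_of_mem (hΩ.mem_nhds hx) (fun y hy => (hfd y hy).hasFDerivAt)
    have := second_derivative_symmetric_of_eventually hev hDfd.hasFDerivAt (e μ) (e τ)
    simp only [Hm, hcomp]
    simpa using this
  -- derivative of g components
  have hF' : ∀ (τ : Fin (n + 1)) (i : Fin (n + 1)),
      HasFDerivAt (fun y => fderiv ℝ f y (e τ) i)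
        ((ContinuousLinearMap.proj i : (Fin (n + 1) → ℝ) →L[ℝ] ℝ).comp
          (fderiv ℝ (fun y => fderiv ℝ f y (e τ)) x)) x := by
    intro τ i
    exact (ContinuousLinearMap.proj i : (Fin (n + 1) → ℝ) →L[ℝ] ℝ).hasFDerivAt.comp x (hf2 τ x hx).hasFDerivAt
  have hDg : ∀ μ ν τ : Fin (n + 1),
      fderiv ℝ (fun y => g y ν τ) x (e μ)
        = ∑ i, ηf i * (F ν i * Hm μ τ i + F τ i * Hm μ ν i) := by
    intro μ ν τ
    have hgrep : (fun y => g y ν τ)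
        =ᶠ[nhds x] (fun y => ∑ i, ηf i * (fderiv ℝ f y (e ν) i * fderiv ℝ f y (e τ) i)) := by
      refine Filter.eventually_of_mem (hΩ.mem_nhds hx) (fun y hy => ?_)
      show g y ν τ = _
      rw [← hiso y hy]
      simp only [minkowskiEta, Matrix.mul_apply, Matrix.mul_diagonal, Matrix.transpose_apply,
        jacobian, Matrix.of_apply, Matrix.diagonal_apply, mul_ite, mul_zero,
        Finset.sum_ite_eq, Finset.mem_univ, if_true]
      exact Finset.sum_congr rfl fun i _ => by simp [ηf, e, Finset.sum_ite_eq]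
    rw [hgrep.fderiv_eq]
    have hder : HasFDerivAt
        (fun y => ∑ i, ηf i * (fderiv ℝ f y (e ν) i * fderiv ℝ f y (e τ) i))
        (∑ i, ηf i • ((fderiv ℝ f x (e ν) i) •
            ((ContinuousLinearMap.proj i : (Fin (n + 1) → ℝ) →L[ℝ] ℝ).comp
              (fderiv ℝ (fun y => fderiv ℝ f y (e τ)) x))
          + (fderiv ℝ f x (e τ) i) •
            ((ContinuousLinearMap.proj i : (Fin (n + 1) → ℝ) →L[ℝ] ℝ).comp
              (fderiv ℝ (fun y => fderiv ℝ f y (e ν)) x)))) x := by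
      refine HasFDerivAt.fun_sum fun i _ => ?_
      exact ((hF' ν i).mul (hF' τ i)).const_mul (ηf i)
    rw [hder.fderiv]
    simp [F, Hm, mul_add]
  -- matrix algebra
  set Jm := jacobian n f x with hJm
  have hJdet : IsUnit Jm.det := (Matrix.isUnit_iff_isUnit_det _).mp (himm x hx)
  have hgdet : IsUnit (g x).det := (Matrix.isUnit_iff_isUnit_det _).mp (hginv x hx)
  set w : Fin (n + 1) → ℝ := Jm⁻¹ *ᵥ (Hm α σ) with hw
  have hJw : Jm *ᵥ w = Hm α σ := by
    rw [hw, Matrix.mulVec_mulVec, Matrix.mul_nonsing_inv _ hJdet, Matrix.one_mulVec]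
  have hgw : ∀ ν, (∑ i, ηf i * (F ν i * Hm α σ i)) = (g x *ᵥ w) ν := by
    intro ν
    rw [← hiso x hx, ← Matrix.mulVec_mulVec, hJw]
    simp only [Matrix.mulVec, dotProduct, Matrix.mul_diagonal, Matrix.transpose_apply,
      minkowskiEta, hJm, jacobian, Matrix.of_apply]
    exact Finset.sum_congr rfl fun i _ => by simp [F, ηf, e]
  have hwβ : ∀ β, (∑ ν, (g x)⁻¹ β ν * (g x *ᵥ w) ν) = w β := by
    intro β
    have h1 : (g x)⁻¹ *ᵥ (g x *ᵥ w) = w := by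
      rw [Matrix.mulVec_mulVec, Matrix.nonsing_inv_mul _ hgdet, Matrix.one_mulVec]
    conv_rhs => rw [← h1]
    simp [Matrix.mulVec, dotProduct]
  -- the bracket simplifies
  have hbr : ∀ ν : Fin (n + 1),
      (fderiv ℝ (fun y => g y ν σ) x (e α)
       + fderiv ℝ (fun y => g y α ν) x (e σ)
       - fderiv ℝ (fun y => g y α σ) x (e ν))
      = 2 * ∑ i, ηf i * (F ν i * Hm α σ i) := by
    intro ν
    rw [hDg α ν σ, hDg σ α ν, hDg ν α σ, hsym σ α, hsym σ ν, hsym ν α]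
    rw [Finset.mul_sum, ← Finset.sum_add_distrib, ← Finset.sum_sub_distrib]
    exact Finset.sum_congr rfl fun i _ => by ring
  -- conclude
  show Hm α σ = ∑ β, _ • F β
  funext i
  rw [← hJw]
  simp only [Finset.sum_apply, Pi.smul_apply, smul_eq_mul]
  have : ∀ β, ((1 / 2 : ℝ) * ∑ ν, (g x)⁻¹ β ν *
      (fderiv ℝ (fun y => g y ν σ) x (e α)
       + fderiv ℝ (fun y => g y α ν) x (e σ)
       - fderiv ℝ (fun y => g y α σ) x (e ν))) = w β := by
    intro β
    have h2 : (∑ ν, (g x)⁻¹ β ν *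
        (fderiv ℝ (fun y => g y ν σ) x (e α)
         + fderiv ℝ (fun y => g y α ν) x (e σ)
         - fderiv ℝ (fun y => g y α σ) x (e ν)))
        = 2 * ∑ ν, (g x)⁻¹ β ν * (g x *ᵥ w) ν := by
      rw [Finset.mul_sum]
      refine Finset.sum_congr rfl fun ν _ => ?_
      rw [hbr ν, hgw ν]; ring
    rw [h2, hwβ β]; ring
  calc (Jm *ᵥ w) i = ∑ β, w β * F β i := by
        simp only [Matrix.mulVec, dotProduct, hJm, jacobian, Matrix.of_apply]
        exact Finset.sum_congr rfl fun β _ => by simp [F, e, mul_comm]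
    _ = ∑ β, ((1 / 2 : ℝ) * ∑ ν, (g x)⁻¹ β ν *
          (fderiv ℝ (fun y => g y ν σ) x (e α)
           + fderiv ℝ (fun y => g y α ν) x (e σ)
           - fderiv ℝ (fun y => g y α σ) x (e ν))) * F β i := by
        exact Finset.sum_congr rfl fun β _ => by rw [this β]
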